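/- Let (G,σ) be a 2-edge-connected signed graph whose signature has the minimum number of negative edges among equivalent signatures. Then the positive subgraph G⁺ = G \ E⁻(G,σ) is a connected spanning subgraph of G. -/

import Mathlib

open SimpleGraph

open scoped Classical

variable {V : Type*} [Fintype V] [DecidableEq V]

/-- Number of negative edges (w.r.t. signature `σ`, `true` = negative) in a set of edges. -/
noncomputable def negCount (σ : Sym2 V → Bool) (s : Set (Sym2 V)) : ℕ :=
  {e ∈ s | σ e = true}.ncard

/-- A subgraph is a cycle: connected and 2-regular (on its vertex set). -/
def SubIsCycle (G : SimpleGraph V) (C : G.Subgraph) : Prop :=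
  C.Connected ∧ ∀ v ∈ C.verts, (C.neighborSet v).ncard = 2

/-- A positive cycle: a cycle with an even number of negative edges. -/
def IsPosCycle (G : SimpleGraph V) (σ : Sym2 V → Bool) (C : G.Subgraph) : Prop :=
  SubIsCycle G C ∧ Even (negCount σ C.edgeSet)

/-- A negative cycle: a cycle with an odd number of negative edges. -/
def IsNegCycle (G : SimpleGraph V) (σ : Sym2 V → Bool) (C : G.Subgraph) : Prop :=
  SubIsCycle G C ∧ Odd (negCount σ C.edgeSet)

/-- A subgraph is a path from `u` to `v` (possibly of length zero). -/
def IsPathSub (G : SimpleGraph V) (P : G.Subgraph) (u v : V) : Prop :=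
  ∃ w : G.Walk u v, w.IsPath ∧ P = w.toSubgraph

/-- A barbell: two edge-disjoint negative cycles joined by a path (possibly of length zero). -/
def IsBarbell (G : SimpleGraph V) (σ : Sym2 V → Bool) (B : G.Subgraph) : Prop :=
  ∃ C₁ C₂ P : G.Subgraph, IsNegCycle G σ C₁ ∧ IsNegCycle G σ C₂ ∧
    C₁.edgeSet ∩ C₂.edgeSet = ∅ ∧
    (∃ u v : V, IsPathSub G P u v ∧ u ∈ C₁.verts ∧ v ∈ C₂.verts ∧
      P.verts ∩ C₁.verts = {u} ∧ P.verts ∩ C₂.verts = {v}) ∧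
    C₁.verts ∩ C₂.verts ⊆ P.verts ∧
    B = C₁ ⊔ C₂ ⊔ P

/-- A circuit of a signed graph: a positive cycle or a barbell. -/
def IsCircuit (G : SimpleGraph V) (σ : Sym2 V → Bool) (C : G.Subgraph) : Prop :=
  IsPosCycle G σ C ∨ IsBarbell G σ C

/-- Total length (number of edges, with multiplicity) of a family of subgraphs. -/
noncomputable def coverLen (G : SimpleGraph V) (F : Multiset G.Subgraph) : ℕ :=
  (F.map fun C => C.edgeSet.ncard).sum

/-- A circuit cover: a family of circuits covering all edges of the graph. -/
def IsCircuitCover (G : SimpleGraph V) (σ : Sym2 V → Bool) (F : Multiset G.Subgraph) : Prop :=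
  (∀ C ∈ F, IsCircuit G σ C) ∧ ∀ e ∈ G.edgeSet, ∃ C ∈ F, e ∈ C.edgeSet

/-- The length of a shortest circuit cover. -/
noncomputable def scc (G : SimpleGraph V) (σ : Sym2 V → Bool) : ℕ :=
  sInf {n | ∃ F : Multiset G.Subgraph, IsCircuitCover G σ F ∧ coverLen G F = n}

/-- An edge crosses the cut determined by a vertex set `X`. -/
def crossesCut (X : Set V) (e : Sym2 V) : Prop :=
  ∃ u v : V, e = s(u, v) ∧ (u ∈ X ↔ v ∉ X)

/-- The edge cut of `G` determined by the vertex set `X`. -/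
def cutEdges (G : SimpleGraph V) (X : Set V) : Set (Sym2 V) :=
  {e ∈ G.edgeSet | crossesCut X e}

/-- Two signatures are (switching) equivalent: they differ exactly on an edge cut. -/
def SwitchEquiv (G : SimpleGraph V) (σ σ' : Sym2 V → Bool) : Prop :=
  ∃ X : Set V, ∀ e ∈ G.edgeSet,
    (crossesCut X e → σ' e = !σ e) ∧ (¬crossesCut X e → σ' e = σ e)

/-- The negativeness: minimum number of negative edges over equivalent signatures. -/
noncomputable def epsilonNeg (G : SimpleGraph V) (σ : Sym2 V → Bool) : ℕ :=
  sInf {n | ∃ σ' : Sym2 V → Bool, SwitchEquiv G σ σ' ∧ negCount σ' G.edgeSet = n}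

/-- `σ` attains the minimum number of negative edges among equivalent signatures. -/
def MinSignature (G : SimpleGraph V) (σ : Sym2 V → Bool) : Prop :=
  negCount σ G.edgeSet = epsilonNeg G σ

/-- `G` is 2-edge-connected: connected and with no cutedge. -/
def TwoEdgeConnected (G : SimpleGraph V) : Prop :=
  G.Connected ∧ ∀ e ∈ G.edgeSet, (G.deleteEdges {e}).Connected

/-- `G` is cubic (3-regular). -/
def IsCubic (G : SimpleGraph V) : Prop :=
  ∀ v : V, (G.neighborSet v).ncard = 3

/-- The positive subgraph `G⁺`: delete all negative edges. -/
def posSubgraph (G : SimpleGraph V) (σ : Sym2 V → Bool) : SimpleGraph V :=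
  G.deleteEdges {e | σ e = true}

/-- Number of edges of `G`. -/
noncomputable def numEdges (G : SimpleGraph V) : ℕ := G.edgeSet.ncard

/-- A cycle-tree: connected, no degree-1 vertices, all cycles pairwise edge-disjoint. -/
def IsCycleTree (H : SimpleGraph V) : Prop :=
  H.Connected ∧ (∀ v : V, (H.neighborSet v).ncard ≠ 1) ∧
    ∀ C₁ C₂ : H.Subgraph, SubIsCycle H C₁ → SubIsCycle H C₂ → C₁ ≠ C₂ →
      C₁.edgeSet ∩ C₂.edgeSet = ∅

/-- A signed cycle-tree: a cycle-tree in which every cycle has a negative edge. -/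
def IsSignedCycleTree (H : SimpleGraph V) (σ : Sym2 V → Bool) : Prop :=
  IsCycleTree H ∧ ∀ C : H.Subgraph, SubIsCycle H C → 0 < negCount σ C.edgeSet

/-- A leaf-cycle of `H`: a cycle `D` attached to the rest of `H` through a single vertex `v`. -/
def IsLeafCycle (H : SimpleGraph V) (D : H.Subgraph) : Prop :=
  SubIsCycle H D ∧ ∃ v ∈ D.verts, ∀ e ∈ H.edgeSet,
    (∃ u : V, u ∈ e ∧ u ∈ D.verts ∧ u ≠ v) → e ∈ D.edgeSet

/-- A subgraph `N` of `G` is a cycle-tree. -/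
def IsCycleTreeSub (G : SimpleGraph V) (N : G.Subgraph) : Prop :=
  N.Connected ∧ (∀ v ∈ N.verts, (N.neighborSet v).ncard ≠ 1) ∧
    ∀ C₁ C₂ : G.Subgraph, C₁ ≤ N → C₂ ≤ N → SubIsCycle G C₁ → SubIsCycle G C₂ →
      C₁ ≠ C₂ → C₁.edgeSet ∩ C₂.edgeSet = ∅

/-- A leaf-cycle of a cycle-tree subgraph `N`. -/
def IsLeafCycleOf (G : SimpleGraph V) (N D : G.Subgraph) : Prop :=
  D ≤ N ∧ SubIsCycle G D ∧ ∃ v ∈ D.verts, ∀ e ∈ N.edgeSet,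
    (∃ u : V, u ∈ e ∧ u ∈ D.verts ∧ u ≠ v) → e ∈ D.edgeSet

/-- The signed girth: minimum length of a circuit containing a negative edge. -/
noncomputable def signedGirth (G : SimpleGraph V) (σ : Sym2 V → Bool) : ℕ :=
  sInf {n | ∃ C : G.Subgraph, IsCircuit G σ C ∧ 0 < negCount σ C.edgeSet ∧ C.edgeSet.ncard = n}

theorem stmt_8 (G : SimpleGraph V) (σ : Sym2 V → Bool)
    (h2ec : TwoEdgeConnected G) (hmin : MinSignature G σ) :
    (posSubgraph G σ).Connected := by
  by_contra hnc
  have hne : Nonempty V := h2ec.1.nonempty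
  rw [SimpleGraph.connected_iff] at hnc
  push_neg at hnc
  obtain ⟨u, v, huv⟩ : ∃ u v : V, ¬ (posSubgraph G σ).Reachable u v := by
    by_contra h
    push_neg at h
    exact (hnc (fun a b => h a b)).false hne.some
  -- X : reachability class of u in the positive subgraph
  set X : Set V := {w | (posSubgraph G σ).Reachable u w} with hX
  have huX : u ∈ X := SimpleGraph.Reachable.refl u
  have hvX : v ∉ X := huv
  -- every crossing edge is negative
  have hcross_neg : ∀ e ∈ G.edgeSet, crossesCut X e → σ e = true := by
    intro e he hc
    obtain ⟨a, b, rfl, hiff⟩ := hc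
    by_contra hσ
    have hadj : (posSubgraph G σ).Adj a b := by
      rw [posSubgraph, SimpleGraph.deleteEdges_adj]
      exact ⟨(SimpleGraph.mem_edgeSet G).mp he, by simpa using hσ⟩
    by_cases haX : a ∈ X
    · exact (hiff.mp haX) (haX.trans hadj.reachable)
    · have hbX : b ∈ X := by
        by_contra hbX
        exact haX (hiff.mpr hbX)
      exact haX (hbX.trans hadj.symm.reachable)
  -- there is at least one crossing edge
  obtain ⟨w⟩ := (h2ec.1.preconnected u v)
  obtain ⟨d, _, hdfst, hdsnd⟩ := w.exists_boundary_dart X huX hvX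
  have hd_mem : d.edge ∈ G.edgeSet := d.edge_mem
  have hd_cross : crossesCut X d.edge :=
    ⟨d.fst, d.snd, rfl, by simp [hdfst, hdsnd]⟩
  -- the switched signature
  set σ' : Sym2 V → Bool := fun e => if crossesCut X e then !σ e else σ e with hσ'
  have hequiv : SwitchEquiv G σ σ' := by
    refine ⟨X, fun e _ => ⟨fun hc => ?_, fun hc => ?_⟩⟩ <;> simp [hσ', hc]
  -- new negative set is a strict subset of the old one
  have hsub : {e ∈ G.edgeSet | σ' e = true} ⊂ {e ∈ G.edgeSet | σ e = true} := by
    constructor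
    · intro e ⟨he, he'⟩
      refine ⟨he, ?_⟩
      by_cases hc : crossesCut X e
      · exact absurd he' (by simp [hσ', hc, hcross_neg e he hc])
      · simpa [hσ', hc] using he'
    · intro hsub'
      have : d.edge ∈ {e ∈ G.edgeSet | σ' e = true} :=
        hsub' ⟨hd_mem, hcross_neg d.edge hd_mem hd_cross⟩
      have : σ' d.edge = true := this.2
      simp [hσ', hd_cross, hcross_neg d.edge hd_mem hd_cross] at this
  have hlt : negCount σ' G.edgeSet < negCount σ G.edgeSet :=
    Set.ncard_lt_ncard hsub (Set.toFinite _)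
  have hle : epsilonNeg G σ ≤ negCount σ' G.edgeSet :=
    Nat.sInf_le ⟨σ', hequiv, rfl⟩
  rw [MinSignature] at hmin
  omega
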